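/- Let $I$ be a zero-dimensional ideal of $P = K[x_1,\dots,x_n]$, $f \in P$, and let $\mu = \mu_{f,I}(z)$ be the minimal polynomial of $f$ modulo $I$. If $\mu = \prod_{j=1}^s \mu_j^{d_j}$ is the factorization of $\mu$ into pairwise distinct monic irreducible factors, then $I = \bigcap_{j=1}^s \big( I + \langle \mu_j(f)^{d_j} \rangle \big)$. -/

import Mathlib

theorem stmt16 {K : Type*} [Field K] {n : ℕ} (I : Ideal (MvPolynomial (Fin n) K))
    [FiniteDimensional K (MvPolynomial (Fin n) K ⧸ I)] (f : MvPolynomial (Fin n) K)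
    (s : ℕ) (μ : Fin s → Polynomial K) (d : Fin s → ℕ)
    (hmonic : ∀ j, (μ j).Monic) (hirr : ∀ j, Irreducible (μ j))
    (hinj : Function.Injective μ) (hd : ∀ j, 0 < d j)
    (hfac : minpoly K (Ideal.Quotient.mk I f) = ∏ j, μ j ^ d j) :
    I = ⨅ j, (I ⊔ Ideal.span {(Polynomial.aeval f (μ j)) ^ d j}) := by
  classical
  set π := Ideal.Quotient.mk I
  set x := π f
  -- coprimality of the μ j ^ d j
  have hcop : ∀ i j, i ≠ j → IsCoprime (μ i ^ d i) (μ j ^ d j) := by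
    intro i j hij
    refine IsCoprime.pow ?_
    rcases (hirr i).isCoprime_or_dvd (μ j) with h | h
    · exact h
    · exfalso
      have hass := ((hirr i).associated_of_dvd (hirr j) h).symm
      exact hij (hinj (Polynomial.eq_of_monic_of_associated (hmonic i) (hmonic j) hass.symm))
  have hsurj : Function.Surjective π := Ideal.Quotient.mk_surjective
  -- rewrite each ideal as a comap
  have hcomap : ∀ j, I ⊔ Ideal.span {(Polynomial.aeval f (μ j)) ^ d j}
      = Ideal.comap π (Ideal.span {(Polynomial.aeval x (μ j)) ^ d j}) := by
    intro j
    have h1 : Ideal.map π (Ideal.span {(Polynomial.aeval f (μ j)) ^ d j})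
        = Ideal.span {(Polynomial.aeval x (μ j)) ^ d j} := by
      rw [Ideal.map_span, Set.image_singleton, map_pow,
        show π ((Polynomial.aeval f) (μ j)) = Polynomial.aeval x (μ j) from
          (Polynomial.aeval_algHom_apply (Ideal.Quotient.mkₐ K I) f (μ j)).symm]
    rw [← h1, Ideal.comap_map_of_surjective π hsurj, ← RingHom.ker_eq_comap_bot,
      Ideal.mk_ker, sup_comm]
  have hinf : ⨅ j, Ideal.span {(Polynomial.aeval x (μ j)) ^ d j}
      = (⊥ : Ideal (MvPolynomial (Fin n) K ⧸ I)) := by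
    have hcop' : ∀ i j, i ≠ j →
        IsCoprime ((Polynomial.aeval x (μ i)) ^ d i) ((Polynomial.aeval x (μ j)) ^ d j) := by
      intro i j hij
      have := (hcop i j hij).map (Polynomial.aeval x : Polynomial K →ₐ[K] _).toRingHom
      simpa using this
    rw [Ideal.iInf_span_singleton hcop']
    have : (∏ j, (Polynomial.aeval x (μ j)) ^ d j) = 0 := by
      have := minpoly.aeval K x
      rw [hfac] at this
      simpa using this
    rw [this, Ideal.span_singleton_eq_bot]
  calc I = Ideal.comap π ⊥ := by rw [← RingHom.ker_eq_comap_bot, Ideal.mk_ker]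
    _ = Ideal.comap π (⨅ j, Ideal.span {(Polynomial.aeval x (μ j)) ^ d j}) := by rw [hinf]
    _ = ⨅ j, Ideal.comap π (Ideal.span {(Polynomial.aeval x (μ j)) ^ d j}) := Ideal.comap_iInf _ _
    _ = ⨅ j, (I ⊔ Ideal.span {(Polynomial.aeval f (μ j)) ^ d j}) := by
        simp_rw [hcomap]
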